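/- Let P ⊆ S² be a finite set contained in a hemisphere, let C be the smallest spherical circle enclosing P, with center c ∈ S² and radius r < π/2, and let B(c̃, r̃) be the smallest Euclidean ball enclosing P, with center c̃ ∈ ℝ³ and radius r̃. Then c̃ = (cos r)·c and r̃ = sin r. -/

import Mathlib

open scoped RealInnerProductSpace
open Real

local notation "E" => EuclideanSpace ℝ (Fin 3)

private lemma arccos_anti {x y : ℝ} (h : x ≤ y) : Real.arccos y ≤ Real.arccos x := by
  rw [Real.arccos, Real.arccos]
  have := Real.monotone_arcsin h
  linarith

set_option maxHeartbeats 1000000 in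
theorem smallest_ball_from_smallest_circle (P : Finset E) (hP : P.Nonempty)
    (hsphere : ∀ x ∈ P, ‖x‖ = 1)
    (c : E) (hc : ‖c‖ = 1) (r : ℝ) (hr0 : 0 ≤ r) (hr : r < π / 2)
    (hencl : ∀ x ∈ P, Real.arccos ⟪c, x⟫ ≤ r)
    (hmin : ∀ (c' : E) (r' : ℝ), ‖c'‖ = 1 → (∀ x ∈ P, Real.arccos ⟪c', x⟫ ≤ r') → r ≤ r')
    (ct : E) (rt : ℝ)
    (hbencl : ∀ x ∈ P, x ∈ Metric.closedBall ct rt)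
    (hbmin : ∀ (c' : E) (r' : ℝ), (∀ x ∈ P, x ∈ Metric.closedBall c' r') → rt ≤ r') :
    ct = (Real.cos r) • c ∧ rt = Real.sin r := by
  have hpi := Real.pi_pos
  have hcosr : 0 < Real.cos r := Real.cos_pos_of_mem_Ioo ⟨by linarith, hr⟩
  have hsinr0 : 0 ≤ Real.sin r := Real.sin_nonneg_of_nonneg_of_le_pi hr0 (by linarith)
  have hsinr1 : Real.sin r < 1 := by
    have := Real.sin_lt_sin_of_lt_of_le_pi_div_two (by linarith : -(π/2) ≤ r) le_rfl hr
    rwa [Real.sin_pi_div_two] at this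
  -- Step 1: inner product characterization of spherical enclosure
  have hinner : ∀ x ∈ P, Real.cos r ≤ ⟪c, x⟫ := by
    intro x hx
    have h1 : |⟪c, x⟫| ≤ 1 := by
      have := abs_real_inner_le_norm c x
      rw [hc, hsphere x hx] at this
      simpa using this
    rw [abs_le] at h1
    have h2 := Real.cos_le_cos_of_nonneg_of_le_pi (Real.arccos_nonneg _)
      (by linarith : r ≤ π) (hencl x hx)
    rwa [Real.cos_arccos h1.1 h1.2] at h2
  -- Step 2: the ball (cos r • c, sin r) encloses P
  have hball : ∀ x ∈ P, x ∈ Metric.closedBall ((Real.cos r) • c) (Real.sin r) := by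
    intro x hx
    rw [Metric.mem_closedBall, dist_eq_norm]
    have hx1 : ‖x‖ = 1 := hsphere x hx
    have hxc := hinner x hx
    have hsq : ‖x - (Real.cos r) • c‖ ^ 2 ≤ Real.sin r ^ 2 := by
      rw [norm_sub_sq_real, real_inner_smul_right, norm_smul, hx1, hc]
      rw [Real.norm_eq_abs, abs_of_pos hcosr]
      nlinarith [Real.sin_sq_add_cos_sq r, real_inner_comm c x]
    calc ‖x - (Real.cos r) • c‖ = Real.sqrt (‖x - (Real.cos r) • c‖ ^ 2) :=
          (Real.sqrt_sq (norm_nonneg _)).symm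
      _ ≤ Real.sqrt (Real.sin r ^ 2) := Real.sqrt_le_sqrt hsq
      _ = Real.sin r := Real.sqrt_sq hsinr0
  -- Step 3: rt ≤ sin r
  have hrt_le : rt ≤ Real.sin r := hbmin _ _ hball
  obtain ⟨x0, hx0⟩ := hP
  have hrt0 : 0 ≤ rt := le_trans dist_nonneg (Metric.mem_closedBall.mp (hbencl x0 hx0))
  -- Step 4: ct ≠ 0
  have hct : ct ≠ 0 := by
    intro h
    have h1 := Metric.mem_closedBall.mp (hbencl x0 hx0)
    rw [h, dist_zero_right, hsphere x0 hx0] at h1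
    linarith
  set d := ‖ct‖ with hd_def
  have hd : 0 < d := norm_pos_iff.mpr hct
  set c' : E := d⁻¹ • ct with hc'_def
  have hc'1 : ‖c'‖ = 1 := by
    rw [hc'_def, norm_smul, Real.norm_eq_abs, abs_inv, abs_of_pos hd]
    field_simp
    exact hd_def.symm
  set t : ℝ := (1 + d ^ 2 - rt ^ 2) / (2 * d) with ht_def
  -- inner product lower bound for points in the ball
  have hballsq : ∀ x ∈ P, 1 + d ^ 2 - rt ^ 2 ≤ 2 * ⟪x, ct⟫ := by
    intro x hx
    have h1 : ‖x - ct‖ ≤ rt := by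
      have := Metric.mem_closedBall.mp (hbencl x hx)
      rwa [dist_eq_norm] at this
    have h2 : ‖x - ct‖ ^ 2 ≤ rt ^ 2 := by nlinarith [norm_nonneg (x - ct)]
    rw [norm_sub_sq_real, hsphere x hx] at h2
    nlinarith
  have hkey : ∀ x ∈ P, t ≤ ⟪c', x⟫ := by
    intro x hx
    rw [hc'_def, real_inner_smul_left, real_inner_comm]
    rw [ht_def, div_le_iff₀ (by positivity : (0:ℝ) < 2 * d)]
    have heq : d⁻¹ * ⟪x, ct⟫ * (2 * d) = 2 * ⟪x, ct⟫ := by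
      field_simp
    rw [heq]
    exact hballsq x hx
  -- t ≤ 1 and -1 ≤ t
  have ht1 : t ≤ 1 := by
    have h1 : ⟪x0, ct⟫ ≤ d := by
      have := real_inner_le_norm x0 ct
      rwa [hsphere x0 hx0, one_mul] at this
    have h2 := hballsq x0 hx0
    rw [ht_def, div_le_one (by positivity : (0:ℝ) < 2 * d)]
    nlinarith
  have htm1 : -1 ≤ t := by
    rw [ht_def, le_div_iff₀ (by positivity : (0:ℝ) < 2 * d)]
    nlinarith
  -- apply spherical minimality
  have hrle := hmin c' (Real.arccos t) hc'1 (fun x hx => arccos_anti (hkey x hx))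
  have hct_cos : t ≤ Real.cos r := by
    have h2 := Real.cos_le_cos_of_nonneg_of_le_pi hr0 (Real.arccos_le_pi t) hrle
    rwa [Real.cos_arccos htm1 ht1] at h2
  have hmain : 1 + d ^ 2 - rt ^ 2 ≤ 2 * d * Real.cos r := by
    rw [ht_def, div_le_iff₀ (by positivity : (0:ℝ) < 2 * d)] at hct_cos
    linarith [hct_cos]
  have hpyth := Real.sin_sq_add_cos_sq r
  -- rt² ≥ (d - cos r)² + sin² r, combined with rt ≤ sin r
  have hrt_eq : rt = Real.sin r := by nlinarith [sq_nonneg (d - Real.cos r)]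
  have hd_eq : d = Real.cos r := by nlinarith [sq_nonneg (d - Real.cos r)]
  refine ⟨?_, hrt_eq⟩
  -- uniqueness of the center via midpoint argument
  by_contra hne
  set e := ‖ct - (Real.cos r) • c‖ with he_def
  have he : 0 < e := by
    rw [he_def, norm_pos_iff]
    exact fun h => hne (sub_eq_zero.mp h)
  set m : E := (2:ℝ)⁻¹ • (ct + (Real.cos r) • c) with hm_def
  have hmid : ∀ x ∈ P, ‖x - m‖ ^ 2 ≤ rt ^ 2 - e ^ 2 / 4 := by
    intro x hx
    have h1 : ‖x - ct‖ ^ 2 ≤ rt ^ 2 := by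
      have := Metric.mem_closedBall.mp (hbencl x hx)
      rw [dist_eq_norm] at this
      nlinarith [norm_nonneg (x - ct)]
    have h2 : ‖x - (Real.cos r) • c‖ ^ 2 ≤ rt ^ 2 := by
      have := Metric.mem_closedBall.mp (hball x hx)
      rw [dist_eq_norm, ← hrt_eq] at this
      nlinarith [norm_nonneg (x - (Real.cos r) • c)]
    have hpar := parallelogram_law_with_norm ℝ (x - ct) (x - (Real.cos r) • c)
    have h2m : (2:ℝ) • m = ct + (Real.cos r) • c := by
      rw [hm_def, smul_smul]
      norm_num
    have ha : (x - ct) + (x - (Real.cos r) • c) = (2:ℝ) • (x - m) := by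
      rw [smul_sub, h2m, two_smul]; abel
    have hb : (x - ct) - (x - (Real.cos r) • c) = -(ct - (Real.cos r) • c) := by
      abel
    rw [ha, hb, norm_neg, norm_smul] at hpar
    rw [← he_def] at hpar
    have : (‖(2:ℝ)‖ * ‖x - m‖) ^ 2 = 4 * ‖x - m‖ ^ 2 := by
      rw [Real.norm_ofNat]; ring
    nlinarith
  have hnn : 0 ≤ rt ^ 2 - e ^ 2 / 4 := le_trans (sq_nonneg _) (hmid x0 hx0)
  have henc' : ∀ x ∈ P, x ∈ Metric.closedBall m (Real.sqrt (rt ^ 2 - e ^ 2 / 4)) := by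
    intro x hx
    rw [Metric.mem_closedBall, dist_eq_norm]
    have := Real.sqrt_le_sqrt (hmid x hx)
    rwa [Real.sqrt_sq (norm_nonneg _)] at this
  have hle := hbmin m _ henc'
  have hsq' : rt ^ 2 ≤ rt ^ 2 - e ^ 2 / 4 := by
    have h1 : rt ^ 2 ≤ Real.sqrt (rt ^ 2 - e ^ 2 / 4) ^ 2 := by
      apply pow_le_pow_left₀ hrt0 hle
    rwa [Real.sq_sqrt hnn] at h1
  nlinarith
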